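/- arXiv:2005.01288 — 4 statements merged into one kernel-verified Lean document; each statement's English description precedes it below -/
import Mathlib

section
/- Let α, β ∈ ℂ and let T be the 2×2 complex matrix with rows (α, β) and (0, α), acting on ℓ_p². Then the numerical range V_p(T) is the closed disc centered at α of radius |β|·(1/p)^{1/p}·(1/q)^{1/q}, i.e. V_p(T) = { z ∈ ℂ : |z − α| ≤ |β|·(1/p)^{1/p}·(1/q)^{1/q} }. -/
open Complex Real

/-- The `ℓ_p` norm on `ℂ²`. -/
noncomputable def lpNorm (p : ℝ) (x : Fin 2 → ℂ) : ℝ :=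
  (∑ k, ‖x k‖ ^ p) ^ (1 / p)

/-- The numerical range of a `2 × 2` complex matrix acting on `ℓ_p²`.
Note that when `x k = 0` the corresponding term vanishes since `conj (x k) = 0`. -/
noncomputable def numRange (p : ℝ) (T : Matrix (Fin 2) (Fin 2) ℂ) : Set ℂ :=
  { z | ∃ x : Fin 2 → ℂ, lpNorm p x = 1 ∧
      z = ∑ k, T.mulVec x k * (starRingEnd ℂ) (x k) * ((‖x k‖ ^ (p - 2) : ℝ) : ℂ) }

/-- The numerical radius of a `2 × 2` complex matrix acting on `ℓ_p²`. -/
noncomputable def numRadius (p : ℝ) (T : Matrix (Fin 2) (Fin 2) ℂ) : ℝ :=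
  sSup ((fun z : ℂ => ‖z‖) '' numRange p T)


lemma aux1 (p : ℝ) (hp : 1 < p) (x : ℂ) :
    x * (starRingEnd ℂ) x * ((‖x‖ ^ (p - 2) : ℝ) : ℂ) = ((‖x‖ ^ p : ℝ) : ℂ) := by
  rcases eq_or_ne x 0 with h | h
  · simp [h, Real.zero_rpow (by linarith : p ≠ 0)]
  · have hx : (0:ℝ) < ‖x‖ := norm_pos_iff.mpr h
    rw [Complex.mul_conj, Complex.normSq_eq_norm_sq, ← Complex.ofReal_mul]
    congr 1
    rw [← Real.rpow_natCast ‖x‖ 2, ← Real.rpow_add hx]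
    norm_num

lemma aux2 (p : ℝ) (hp : 1 < p) {s : ℝ} (hs : 0 ≤ s) : s * s ^ (p - 2) = s ^ (p - 1) := by
  rcases eq_or_lt_of_le hs with h | h
  · rw [← h, Real.zero_rpow (by linarith : p - 1 ≠ 0), zero_mul]
  · nth_rewrite 1 [← Real.rpow_one s]
    rw [← Real.rpow_add h]
    ring_nf

lemma sum_eq (p : ℝ) (hp : 1 < p) (α β : ℂ) (x : Fin 2 → ℂ) :
    ∑ k, (!![α, β; 0, α]).mulVec x k * (starRingEnd ℂ) (x k)
        * ((‖x k‖ ^ (p - 2) : ℝ) : ℂ)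
    = α * ((‖x 0‖ ^ p + ‖x 1‖ ^ p : ℝ) : ℂ)
      + β * (x 1 * (starRingEnd ℂ) (x 0) * ((‖x 0‖ ^ (p - 2) : ℝ) : ℂ)) := by
  have e0 := aux1 p hp (x 0)
  have e1 := aux1 p hp (x 1)
  simp only [Fin.sum_univ_two, Matrix.mulVec, dotProduct, Fin.sum_univ_two,
    Matrix.cons_val', Matrix.cons_val_zero, Matrix.cons_val_one, Matrix.head_cons,
    Matrix.empty_val', Matrix.cons_val_fin_one, Matrix.head_fin_const, Matrix.of_apply]
  push_cast
  linear_combination α * e0 + α * e1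

lemma norm_eq_one (p : ℝ) (hp : 1 < p) (x : Fin 2 → ℂ) (hx : lpNorm p x = 1) :
    ‖x 0‖ ^ p + ‖x 1‖ ^ p = 1 := by
  have hp0 : (0:ℝ) < p := by linarith
  unfold lpNorm at hx
  rw [Fin.sum_univ_two] at hx
  have hA : (0:ℝ) ≤ ‖x 0‖ ^ p + ‖x 1‖ ^ p :=
    add_nonneg (Real.rpow_nonneg (norm_nonneg _) _)
      (Real.rpow_nonneg (norm_nonneg _) _)
  have := congrArg (fun y : ℝ => y ^ p) hx
  simpa [← Real.rpow_mul hA, one_div, inv_mul_cancel₀ hp0.ne'] using this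

lemma max_bound (p q : ℝ) (hp : 1 < p) (hq : q = p / (p - 1)) {s t : ℝ} (hs : 0 ≤ s)
    (ht : 0 ≤ t) (h1 : s ^ p + t ^ p = 1) :
    s ^ (p - 1) * t ≤ (1 / p) ^ (1 / p) * (1 / q) ^ (1 / q) := by
  have hp0 : (0:ℝ) < p := by linarith
  have hp1 : (0:ℝ) < p - 1 := by linarith
  have hq0 : (0:ℝ) < q := hq ▸ div_pos hp0 hp1
  have hw : 1 / q + 1 / p = 1 := by rw [hq]; field_simp; ring
  have hsp : (0:ℝ) ≤ s ^ p := Real.rpow_nonneg hs _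
  have htp : (0:ℝ) ≤ t ^ p := Real.rpow_nonneg ht _
  have key := Real.geom_mean_le_arith_mean2_weighted (by positivity : (0:ℝ) ≤ 1/q)
    (by positivity : (0:ℝ) ≤ 1/p) (mul_nonneg hq0.le hsp) (mul_nonneg hp0.le htp) hw
  have hrhs : 1 / q * (q * s ^ p) + 1 / p * (p * t ^ p) = 1 := by
    field_simp; linarith [h1]
  rw [hrhs, Real.mul_rpow hq0.le hsp, Real.mul_rpow hp0.le htp] at key
  have hs1 : (s ^ p) ^ (1 / q) = s ^ (p - 1) := by
    rw [← Real.rpow_mul hs]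
    congr 1
    rw [hq]
    field_simp
  have ht1 : (t ^ p) ^ (1 / p) = t := by
    rw [← Real.rpow_mul ht, mul_one_div, div_self hp0.ne', Real.rpow_one]
  rw [hs1, ht1] at key
  have hD : (0:ℝ) < p ^ (1/p) * q ^ (1/q) := by positivity
  have hgoal : (1 / p) ^ (1 / p) * (1 / q) ^ (1 / q) = 1 / (p ^ (1/p) * q ^ (1/q)) := by
    rw [one_div p, one_div q, Real.inv_rpow hp0.le, Real.inv_rpow hq0.le]
    rw [one_div, mul_inv]
  rw [hgoal, le_div_iff₀ hD]
  calc s ^ (p - 1) * t * (p ^ (1/p) * q ^ (1/q))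
      = q ^ (1 / q) * s ^ (p - 1) * (p ^ (1 / p) * t) := by ring
    _ ≤ 1 := key

theorem upper_triangular_equal_diag_numRange_is_disc (p q : ℝ) (hp : 1 < p)
    (hq : q = p / (p - 1)) (α β : ℂ) :
    numRange p !![α, β; 0, α] =
      { z : ℂ | ‖z - α‖ ≤ ‖β‖ * ((1 / p) ^ (1 / p) * (1 / q) ^ (1 / q)) } := by
  have hp0 : (0:ℝ) < p := by linarith
  have hp1 : (0:ℝ) < p - 1 := by linarith
  have hq0 : (0:ℝ) < q := hq ▸ div_pos hp0 hp1
  ext z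
  simp only [numRange, Set.mem_setOf_eq]
  constructor
  · rintro ⟨x, hx, rfl⟩
    have hnorm := norm_eq_one p hp x hx
    rw [sum_eq p hp α β x, hnorm]
    set s := ‖x 0‖ with hsdef
    set t := ‖x 1‖ with htdef
    have hsplit : α * ((1:ℝ):ℂ) + β * (x 1 * (starRingEnd ℂ) (x 0) * ((s ^ (p-2) : ℝ):ℂ)) - α
        = β * (x 1 * (starRingEnd ℂ) (x 0) * ((s ^ (p-2) : ℝ):ℂ)) := by push_cast; ring
    rw [hsplit, norm_mul]
    have habs : ‖x 1 * (starRingEnd ℂ) (x 0) * ((s ^ (p-2) : ℝ):ℂ)‖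
        = s ^ (p-1) * t := by
      rw [norm_mul, norm_mul, Complex.norm_conj, Complex.norm_real, Real.norm_eq_abs,
        _root_.abs_of_nonneg (Real.rpow_nonneg (norm_nonneg _) _)]
      rw [show t * s * s ^ (p-2) = t * (s * s ^ (p-2)) from by ring,
        aux2 p hp (norm_nonneg _)]
      ring
    rw [habs]
    exact mul_le_mul_of_nonneg_left
      (max_bound p q hp hq (norm_nonneg _) (norm_nonneg _) hnorm)
      (norm_nonneg _)
  · intro hz
    rcases eq_or_ne z α with hzz | hzα
    · refine ⟨![0, 1], ?_, ?_⟩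
      · unfold lpNorm
        simp [Fin.sum_univ_two, Real.zero_rpow hp0.ne']
      · rw [sum_eq p hp α β]
        simp [Real.zero_rpow hp0.ne', hzz]
    · have hzpos : 0 < ‖z - α‖ := by
        simpa [sub_eq_zero] using (norm_pos_iff).mpr (sub_ne_zero.mpr hzα)
      have hβ : β ≠ 0 := by
        intro h
        rw [h] at hz
        simp only [norm_zero, zero_mul] at hz
        linarith
      have hβpos : 0 < ‖β‖ := norm_pos_iff.mpr hβ
      set r : ℝ := (1/p) ^ (1/p) * (1/q) ^ (1/q) with hr
      set c : ℝ := ‖z - α‖ / ‖β‖ with hc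
      have hc0 : 0 < c := div_pos hzpos hβpos
      have hcr : c ≤ r := (div_le_iff₀ hβpos).mpr (by rw [mul_comm]; exact hz)
      have hq1 : 1 < q := by rw [hq, lt_div_iff₀ hp1]; linarith
      have hiq : 1/q < 1 := by rw [div_lt_one hq0]; exact hq1
      have hpq : 1 - 1/q = 1/p := by rw [hq]; field_simp; ring
      set g : ℝ → ℝ := fun u => u ^ (1/q) * (1 - u) ^ (1/p) with hg
      have hcont : ContinuousOn g (Set.Icc 0 (1/q)) :=
        (((Real.continuous_rpow_const (by positivity)).comp continuous_id).mul
          ((Real.continuous_rpow_const (by positivity)).comp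
            (continuous_const.sub continuous_id))).continuousOn
      have hivt := intermediate_value_Icc (by positivity : (0:ℝ) ≤ 1/q) hcont
      have hg0 : g 0 = 0 := by
        simp only [hg]
        rw [Real.zero_rpow (by positivity : (1:ℝ)/q ≠ 0), zero_mul]
      have hgq : g (1/q) = r := by
        simp only [hg, hpq, hr]
        ring
      obtain ⟨u, hu, hgu⟩ := hivt (by rw [hg0, hgq]; exact ⟨hc0.le, hcr⟩)
      have hu0 : 0 < u := by
        rcases hu.1.lt_or_eq with h | h
        · exact h
        · exfalso
          rw [← h, hg0] at hgu
          linarith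
      have hu1 : u < 1 := lt_of_le_of_lt hu.2 hiq
      set s : ℝ := u ^ (1/p) with hs
      set t : ℝ := (1-u) ^ (1/p) with ht
      have hs0 : 0 < s := Real.rpow_pos_of_pos hu0 _
      have ht0 : 0 < t := Real.rpow_pos_of_pos (by linarith) _
      have hsp : s ^ p = u := by
        rw [hs, ← Real.rpow_mul hu0.le, one_div, inv_mul_cancel₀ hp0.ne', Real.rpow_one]
      have htp : t ^ p = 1 - u := by
        rw [ht, ← Real.rpow_mul (by linarith), one_div, inv_mul_cancel₀ hp0.ne', Real.rpow_one]
      have hsq : s ^ (p-1) = u ^ (1/q) := by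
        rw [hs, ← Real.rpow_mul hu0.le]
        congr 1
        rw [hq]
        field_simp
      have hst : s ^ (p-1) * t = c := by rw [hsq, ht]; exact hgu
      have hsp1pos : 0 < s ^ (p-1) := Real.rpow_pos_of_pos hs0 _
      have hs_ne : ((s ^ (p-1) : ℝ):ℂ) ≠ 0 := by exact_mod_cast hsp1pos.ne'
      have hx1 : ‖(z - α) / (β * ((s ^ (p-1) : ℝ):ℂ))‖ = t := by
        rw [norm_div, norm_mul, Complex.norm_real, Real.norm_eq_abs, _root_.abs_of_nonneg hsp1pos.le]
        rw [show ‖z - α‖ = c * ‖β‖ from by rw [hc]; field_simp]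
        rw [← hst]
        field_simp
      refine ⟨![(s:ℂ), (z - α) / (β * ((s ^ (p-1) : ℝ):ℂ))], ?_, ?_⟩
      · unfold lpNorm
        rw [Fin.sum_univ_two]
        simp only [Matrix.cons_val_zero, Matrix.cons_val_one, Matrix.head_cons]
        rw [hx1, Complex.norm_real, Real.norm_eq_abs, _root_.abs_of_nonneg hs0.le, hsp, htp]
        norm_num
      · rw [sum_eq p hp α β]
        simp only [Matrix.cons_val_zero, Matrix.cons_val_one, Matrix.head_cons]
        rw [hx1, Complex.norm_real, Real.norm_eq_abs, _root_.abs_of_nonneg hs0.le, Complex.conj_ofReal]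
        rw [show s ^ p + t ^ p = 1 from by rw [hsp, htp]; ring]
        have hcol : (z - α) / (β * ((s ^ (p-1) : ℝ):ℂ)) * (s:ℂ) * ((s ^ (p-2) : ℝ):ℂ)
            = (z - α) / β := by
          rw [mul_assoc, ← Complex.ofReal_mul, aux2 p hp hs0.le]
          field_simp
        rw [hcol]
        field_simp
        push_cast
        ring
end

section
/- Let b ∈ ℂ and let T be the 2×2 complex matrix with rows (1, b) and (0, −1), acting on ℓ_p². Then V_p(T) = { z ∈ ℂ : there exists θ ∈ [0, 2π] with |z − cos 2θ| = |b|·(sin²θ)^{1/p}·(cos²θ)^{1/q} }; that is, V_p(T) is the union over θ ∈ [0, 2π] of the circles C(θ) centered at the real point cos 2θ with radius R(θ) = |b|·(sin²θ)^{1/p}·(cos²θ)^{1/q}. -/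
open Complex Real

lemma rmul1 (p r : ℝ) (hr : 0 ≤ r) (hp : 1 < p) : r * r ^ (p - 2) = r ^ (p - 1) := by
  rcases eq_or_lt_of_le hr with h | h
  · rw [← h, Real.zero_rpow (show p - 1 ≠ 0 by intro h'; linarith), zero_mul]
  · rw [show p - 1 = 1 + (p - 2) by ring, Real.rpow_add h, Real.rpow_one]

lemma rmul2 (p r : ℝ) (hr : 0 ≤ r) (hp : 1 < p) : r * r * r ^ (p - 2) = r ^ p := by
  rcases eq_or_lt_of_le hr with h | h
  · rw [← h, Real.zero_rpow (show p ≠ 0 by intro h'; linarith), zero_mul, zero_mul]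
  · rw [show p = 1 + 1 + (p - 2) by ring, Real.rpow_add h, Real.rpow_add h, Real.rpow_one]
    ring

lemma sum_eval (p : ℝ) (hp : 1 < p) (b w : ℂ) (r s : ℝ) (hr : 0 ≤ r) (hs : 0 ≤ s)
    (hw : ‖w‖ = 1) :
    (∑ k, (!![1,b;0,-1]).mulVec ![(r:ℂ), (s:ℂ)*w] k * (starRingEnd ℂ) (![(r:ℂ), (s:ℂ)*w] k) *
      ((‖![(r:ℂ),(s:ℂ)*w] k‖ ^ (p-2) : ℝ) : ℂ))
    = ((r^p - s^p : ℝ) : ℂ) + b * ((s:ℂ)*w) * ((r^(p-1) : ℝ) : ℂ) := by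
  have ha0 : ‖(r:ℂ)‖ = r := by rw [Complex.norm_real, Real.norm_eq_abs, _root_.abs_of_nonneg hr]
  have ha1 : ‖(s:ℂ)*w‖ = s := by
    rw [norm_mul, hw, Complex.norm_real, Real.norm_eq_abs, _root_.abs_of_nonneg hs, mul_one]
  have hww : w * (starRingEnd ℂ) w = 1 := by
    rw [Complex.mul_conj, Complex.normSq_eq_norm_sq, hw]; norm_num
  have c1 : (r:ℂ) * ((r ^ (p-2) : ℝ) : ℂ) = ((r ^ (p-1) : ℝ) : ℂ) := by
    rw [← Complex.ofReal_mul, rmul1 p r hr hp]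
  have c2 : (r:ℂ) * (r:ℂ) * ((r ^ (p-2) : ℝ) : ℂ) = ((r ^ p : ℝ) : ℂ) := by
    rw [← Complex.ofReal_mul, ← Complex.ofReal_mul, rmul2 p r hr hp]
  have c2s : (s:ℂ) * (s:ℂ) * ((s ^ (p-2) : ℝ) : ℂ) = ((s ^ p : ℝ) : ℂ) := by
    rw [← Complex.ofReal_mul, ← Complex.ofReal_mul, rmul2 p s hs hp]
  rw [Fin.sum_univ_two]
  simp only [Matrix.mulVec, dotProduct, Fin.sum_univ_two, Matrix.cons_val',
    Matrix.cons_val_zero, Matrix.cons_val_one, Matrix.head_cons, Matrix.empty_val',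
    Matrix.cons_val_fin_one, Matrix.head_fin_const, Matrix.of_apply]
  rw [ha0, ha1]
  simp only [map_mul, Complex.conj_ofReal, Complex.ofReal_sub]
  linear_combination c2 + (b*(s:ℂ)*w)*c1 - ((s:ℂ)*(s:ℂ)*((s^(p-2):ℝ):ℂ))*hww - c2s

lemma norm_eval (p : ℝ) (hp : 1 < p) (w : ℂ) (r s : ℝ) (hr : 0 ≤ r) (hs : 0 ≤ s)
    (hw : ‖w‖ = 1) (hsum : r^p + s^p = 1) :
    lpNorm p ![(r:ℂ), (s:ℂ)*w] = 1 := by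
  unfold lpNorm
  rw [Fin.sum_univ_two]
  simp only [Matrix.cons_val_zero, Matrix.cons_val_one, Matrix.head_cons, norm_mul,
    Complex.norm_real, Real.norm_eq_abs, hw, mul_one, _root_.abs_of_nonneg hr, _root_.abs_of_nonneg hs]
  rw [hsum, Real.one_rpow]

theorem numRange_eq_union_of_circles (p q : ℝ) (hp : 1 < p) (hq : q = p / (p - 1)) (b : ℂ) :
    numRange p !![1, b; 0, -1] =
      { z : ℂ | ∃ θ ∈ Set.Icc (0 : ℝ) (2 * π),
          ‖z - Real.cos (2 * θ)‖ =
            ‖b‖ * (Real.sin θ ^ 2) ^ (1 / p) * (Real.cos θ ^ 2) ^ (1 / q) } := by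
  have hp0 : (0:ℝ) < p := by linarith
  have hq' : 1 / q = (p - 1) / p := by
    rw [hq]; rw [one_div_div]
  ext z
  simp only [numRange, Set.mem_setOf_eq]
  constructor
  · rintro ⟨x, hx, hz⟩
    set r := ‖x 0‖ with hrdef
    set s := ‖x 1‖ with hsdef
    have hr0 : 0 ≤ r := norm_nonneg _
    have hs0 : 0 ≤ s := norm_nonneg _
    have hsum : r ^ p + s ^ p = 1 := by
      unfold lpNorm at hx
      rw [Fin.sum_univ_two] at hx
      have h0 : (0:ℝ) ≤ r ^ p + s ^ p := by positivity
      have h1 := congrArg (· ^ p) hx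
      simpa [← hrdef, ← hsdef, one_div, Real.rpow_inv_rpow h0 (ne_of_gt hp0), Real.one_rpow] using h1
    set θ := Real.arccos (Real.sqrt (r ^ p)) with hθdef
    have hrple : r ^ p ≤ 1 := by
      have : (0:ℝ) ≤ s ^ p := Real.rpow_nonneg hs0 _
      linarith
    have hcos : Real.cos θ = Real.sqrt (r ^ p) :=
      Real.cos_arccos (by linarith [Real.sqrt_nonneg (r ^ p)]) (Real.sqrt_le_one.2 hrple)
    have hcos2 : Real.cos θ ^ 2 = r ^ p := by
      rw [hcos, Real.sq_sqrt (Real.rpow_nonneg hr0 _)]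
    have hsin2 : Real.sin θ ^ 2 = s ^ p := by
      have := Real.sin_sq_add_cos_sq θ
      linarith
    have hcos2θ : Real.cos (2 * θ) = r ^ p - s ^ p := by
      rw [Real.cos_two_mul]; linarith
    refine ⟨θ, ⟨Real.arccos_nonneg _, by linarith [Real.arccos_le_pi (Real.sqrt (r ^ p)), Real.pi_pos]⟩, ?_⟩
    have d0 : x 0 * (starRingEnd ℂ) (x 0) * ((r^(p-2):ℝ):ℂ) = ((r^p:ℝ):ℂ) := by
      rw [Complex.mul_conj]
      have hn : Complex.normSq (x 0) = r * r := by
        rw [Complex.normSq_eq_norm_sq, ← hrdef, sq]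
      rw [hn, ← Complex.ofReal_mul, rmul2 p r hr0 hp]
    have d1 : x 1 * (starRingEnd ℂ) (x 1) * ((s^(p-2):ℝ):ℂ) = ((s^p:ℝ):ℂ) := by
      rw [Complex.mul_conj]
      have hn : Complex.normSq (x 1) = s * s := by
        rw [Complex.normSq_eq_norm_sq, ← hsdef, sq]
      rw [hn, ← Complex.ofReal_mul, rmul2 p s hs0 hp]
    have hz' : z - ((Real.cos (2*θ) : ℝ) : ℂ) = b * x 1 * (starRingEnd ℂ) (x 0) * ((r^(p-2):ℝ):ℂ) := by
      rw [hcos2θ, hz, Fin.sum_univ_two]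
      simp only [Matrix.mulVec, dotProduct, Fin.sum_univ_two, Matrix.cons_val',
        Matrix.cons_val_zero, Matrix.cons_val_one, Matrix.head_cons, Matrix.empty_val',
        Matrix.cons_val_fin_one, Matrix.head_fin_const, Matrix.of_apply, ← hrdef, ← hsdef,
        Complex.ofReal_sub]
      linear_combination d0 - d1
    have e1 : (Real.sin θ ^ 2) ^ (1/p) = s := by
      rw [hsin2, one_div, Real.rpow_rpow_inv hs0 (ne_of_gt hp0)]
    have e2 : (Real.cos θ ^ 2) ^ (1/q) = r ^ (p-1) := by
      rw [hcos2, hq', ← Real.rpow_mul hr0]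
      congr 1
      field_simp
    rw [e1, e2, hz', norm_mul, norm_mul, norm_mul, Complex.norm_conj, Complex.norm_real, Real.norm_eq_abs,
      _root_.abs_of_nonneg (Real.rpow_nonneg hr0 _), ← hrdef, ← hsdef]
    rw [mul_assoc, rmul1 p r hr0 hp]
  · rintro ⟨θ, hθ, habs⟩
    set c := Real.cos (2 * θ) with hcdef
    set r := (Real.cos θ ^ 2) ^ (1/p) with hrdef
    set s := (Real.sin θ ^ 2) ^ (1/p) with hsdef
    have hr0 : 0 ≤ r := Real.rpow_nonneg (sq_nonneg _) _
    have hs0 : 0 ≤ s := Real.rpow_nonneg (sq_nonneg _) _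
    have hrp : r ^ p = Real.cos θ ^ 2 := by
      rw [hrdef, one_div, Real.rpow_inv_rpow (sq_nonneg _) (ne_of_gt hp0)]
    have hsp : s ^ p = Real.sin θ ^ 2 := by
      rw [hsdef, one_div, Real.rpow_inv_rpow (sq_nonneg _) (ne_of_gt hp0)]
    have hsum : r ^ p + s ^ p = 1 := by
      rw [hrp, hsp]
      linarith [Real.sin_sq_add_cos_sq θ]
    have hcs : r ^ p - s ^ p = c := by
      rw [hrp, hsp, hcdef, Real.cos_two_mul]
      linarith [Real.sin_sq_add_cos_sq θ]
    have e2 : (Real.cos θ ^ 2) ^ (1/q) = r ^ (p-1) := by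
      rw [hrdef, hq', ← Real.rpow_mul (sq_nonneg _)]
      congr 1
      field_simp
    have habs' : ‖z - (c:ℂ)‖ = ‖b‖ * (s * r ^ (p-1)) := by
      rw [habs, e2]; ring
    by_cases hzc : z = (c:ℂ)
    · have hzero : ‖b * ((s:ℂ) * 1) * ((r^(p-1):ℝ):ℂ)‖ = 0 := by
        rw [norm_mul, norm_mul, norm_mul, Complex.norm_real, Real.norm_eq_abs, Complex.norm_real, Real.norm_eq_abs, norm_one, mul_one,
          _root_.abs_of_nonneg hs0, _root_.abs_of_nonneg (Real.rpow_nonneg hr0 _), mul_assoc,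
          ← habs', hzc, sub_self, norm_zero]
      rw [norm_eq_zero] at hzero
      refine ⟨![(r:ℂ), (s:ℂ)*1], norm_eval p hp 1 r s hr0 hs0 (by simp) hsum, ?_⟩
      rw [sum_eval p hp b 1 r s hr0 hs0 (by simp), hzero, hcs, hzc, add_zero]
    · have hR0 : ‖z - (c:ℂ)‖ ≠ 0 := by
        simp [sub_eq_zero, hzc]
      have hb0 : ‖b‖ ≠ 0 := by
        intro h
        rw [h, zero_mul] at habs'
        exact hR0 habs'
      set w : ℂ := (z - (c:ℂ)) * (starRingEnd ℂ) b /
        ((‖z - (c:ℂ)‖ * ‖b‖ : ℝ) : ℂ) with hwdef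
      have hden : ((‖z - (c:ℂ)‖ * ‖b‖ : ℝ) : ℂ) ≠ 0 := by
        rw [Complex.ofReal_ne_zero]
        exact mul_ne_zero hR0 hb0
      have hw : ‖w‖ = 1 := by
        rw [hwdef, norm_div, norm_mul, Complex.norm_conj, Complex.norm_real, Real.norm_eq_abs,
          _root_.abs_of_nonneg (by positivity)]
        field_simp
      have hb2 : b * (starRingEnd ℂ) b = ((‖b‖ ^ 2 : ℝ) : ℂ) := by
        rw [Complex.mul_conj, Complex.normSq_eq_norm_sq]
      have hreal : ‖b‖ ^ 2 * (s * r ^ (p-1)) =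
          ‖z - (c:ℂ)‖ * ‖b‖ := by
        rw [habs']; ring
      have hrealC := congrArg (Complex.ofReal) hreal
      push_cast at hrealC
      have key : b * ((s:ℂ) * w) * ((r^(p-1):ℝ):ℂ) = z - (c:ℂ) := by
        have expand : b * ((s:ℂ) * w) * ((r^(p-1):ℝ):ℂ) =
            (z - (c:ℂ)) * ((b * (starRingEnd ℂ) b) * (s:ℂ) * ((r^(p-1):ℝ):ℂ) /
              ((‖z - (c:ℂ)‖ * ‖b‖ : ℝ) : ℂ)) := by
          rw [hwdef]; ring
        have hnum : ((‖b‖ ^ 2 : ℝ):ℂ) * (s:ℂ) * ((r^(p-1):ℝ):ℂ) =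
            ((‖z - (c:ℂ)‖ * ‖b‖ : ℝ) : ℂ) := by
          rw [← Complex.ofReal_mul, ← Complex.ofReal_mul]
          exact congrArg Complex.ofReal (by rw [mul_assoc, hreal])
        rw [expand, hb2, hnum, div_self hden, mul_one]
      refine ⟨![(r:ℂ), (s:ℂ)*w], norm_eval p hp w r s hr0 hs0 hw hsum, ?_⟩
      rw [sum_eval p hp b w r s hr0 hs0 hw, key, hcs]
      ring
end

section
/- Let b ∈ ℂ and let T be the 2×2 complex matrix with rows (1, b) and (0, −1), acting on ℓ_p². Then the numerical range V_p(T), viewed as a subset of ℂ ≅ ℝ², is a convex set. -/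
open Complex Real

/-- The radius function `t ↦ t^{(p-1)/p} (1-t)^{1/p}`. -/
noncomputable def nrF (p t : ℝ) : ℝ := t ^ (1 - 1/p) * (1 - t) ^ (1/p)

/-- Superadditivity of the weighted geometric mean. -/
lemma nr_superadd {a : ℝ} (ha : 0 < a) (ha' : a < 1) {x₁ y₁ x₂ y₂ : ℝ}
    (hx₁ : 0 ≤ x₁) (hy₁ : 0 ≤ y₁) (hx₂ : 0 ≤ x₂) (hy₂ : 0 ≤ y₂) :
    x₁ ^ a * y₁ ^ (1 - a) + x₂ ^ a * y₂ ^ (1 - a) ≤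
      (x₁ + x₂) ^ a * (y₁ + y₂) ^ (1 - a) := by
  have ha1 : 0 < 1 - a := by linarith
  rcases eq_or_lt_of_le (add_nonneg hx₁ hx₂) with hX | hX
  · have h1 : x₁ = 0 := by linarith
    have h2 : x₂ = 0 := by linarith
    simp [h1, h2, Real.zero_rpow ha.ne']
  rcases eq_or_lt_of_le (add_nonneg hy₁ hy₂) with hY | hY
  · have h1 : y₁ = 0 := by linarith
    have h2 : y₂ = 0 := by linarith
    simp [h1, h2, Real.zero_rpow ha1.ne']
  set X := x₁ + x₂
  set Y := y₁ + y₂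
  have key : ∀ x y : ℝ, 0 ≤ x → 0 ≤ y →
      x ^ a * y ^ (1 - a) ≤ X ^ a * Y ^ (1 - a) * (a * (x / X) + (1 - a) * (y / Y)) := by
    intro x y hx hy
    have h1 : x ^ a * y ^ (1 - a) = X ^ a * Y ^ (1 - a) * ((x / X) ^ a * (y / Y) ^ (1 - a)) := by
      rw [Real.div_rpow hx hX.le, Real.div_rpow hy hY.le]
      field_simp
    rw [h1]
    exact mul_le_mul_of_nonneg_left
      (Real.geom_mean_le_arith_mean2_weighted ha.le ha1.le (by positivity) (by positivity)
        (by ring)) (by positivity)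
  calc x₁ ^ a * y₁ ^ (1 - a) + x₂ ^ a * y₂ ^ (1 - a)
      ≤ X ^ a * Y ^ (1 - a) * (a * (x₁ / X) + (1 - a) * (y₁ / Y)) +
        X ^ a * Y ^ (1 - a) * (a * (x₂ / X) + (1 - a) * (y₂ / Y)) :=
        add_le_add (key _ _ hx₁ hy₁) (key _ _ hx₂ hy₂)
    _ = X ^ a * Y ^ (1 - a) * (a * ((x₁ + x₂) / X) + (1 - a) * ((y₁ + y₂) / Y)) := by ring
    _ = X ^ a * Y ^ (1 - a) := by
        rw [div_self hX.ne', div_self hY.ne']; ring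

/-- Concavity of `nrF` on `[0,1]`. -/
lemma nrF_concave {p : ℝ} (hp : 1 < p) {t₁ t₂ lam mu : ℝ}
    (ht₁ : t₁ ∈ Set.Icc (0:ℝ) 1) (ht₂ : t₂ ∈ Set.Icc (0:ℝ) 1)
    (hlam : 0 ≤ lam) (hmu : 0 ≤ mu) (hs : lam + mu = 1) :
    lam * nrF p t₁ + mu * nrF p t₂ ≤ nrF p (lam * t₁ + mu * t₂) := by
  have hp0 : 0 < p := lt_trans one_pos hp
  have hq : 0 < 1/p := by positivity
  have hq1 : 1/p < 1 := by
    rw [div_lt_one hp0]; linarith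
  have ha : 0 < 1 - 1/p := by linarith
  have key : ∀ lam t : ℝ, 0 ≤ lam → t ∈ Set.Icc (0:ℝ) 1 →
      lam * nrF p t = (lam * t) ^ (1 - 1/p) * (lam * (1 - t)) ^ (1/p) := by
    intro lam t hl ht
    rw [Real.mul_rpow hl ht.1, Real.mul_rpow hl (by linarith [ht.2])]
    have : lam ^ (1 - 1/p) * lam ^ (1/p) = lam := by
      rw [← Real.rpow_add' hl (by norm_num), sub_add_cancel, Real.rpow_one]
    unfold nrF
    calc lam * (t ^ (1 - 1/p) * (1 - t) ^ (1/p))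
        = (lam ^ (1 - 1/p) * lam ^ (1/p)) * (t ^ (1 - 1/p) * (1 - t) ^ (1/p)) := by rw [this]
      _ = lam ^ (1 - 1/p) * t ^ (1 - 1/p) * (lam ^ (1/p) * (1 - t) ^ (1/p)) := by ring
  rw [key lam t₁ hlam ht₁, key mu t₂ hmu ht₂]
  have h := nr_superadd (a := 1 - 1/p) (x₁ := lam * t₁) (y₁ := lam * (1 - t₁))
    (x₂ := mu * t₂) (y₂ := mu * (1 - t₂)) ha (by linarith) (mul_nonneg hlam ht₁.1)
    (mul_nonneg hlam (by linarith [ht₁.2])) (mul_nonneg hmu ht₂.1)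
    (mul_nonneg hmu (by linarith [ht₂.2]))
  have e0 : 1 - (1 - 1/p) = 1/p := by ring
  rw [e0] at h
  have e1 : lam * (1 - t₁) + mu * (1 - t₂) = 1 - (lam * t₁ + mu * t₂) := by
    linarith
  rw [e1] at h
  exact h

lemma sq_mul_rpow {p r : ℝ} (hr : 0 ≤ r) (hp : p ≠ 0) : r ^ 2 * r ^ (p - 2) = r ^ p := by
  rcases eq_or_lt_of_le hr with h | h
  · rw [← h]
    simp [Real.zero_rpow hp]
  · rw [← Real.rpow_natCast r 2, ← Real.rpow_add h]
    norm_num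

lemma mul_rpow_sub {p r : ℝ} (hr : 0 ≤ r) (hp : 1 < p) : r * r ^ (p - 2) = r ^ (p - 1) := by
  rcases eq_or_lt_of_le hr with h | h
  · rw [← h]
    rw [Real.zero_rpow (by linarith : p - 1 ≠ 0)]
    ring
  · nth_rewrite 1 [← Real.rpow_one r]
    rw [← Real.rpow_add h]
    congr 1
    ring

/-- The target convex set. -/
def nrS (p : ℝ) (b : ℂ) : Set ℂ :=
  {z : ℂ | ∃ t ∈ Set.Icc (0:ℝ) 1,
    ‖z - ((2*t - 1 : ℝ) : ℂ)‖ ≤ ‖b‖ * nrF p t}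

lemma numRange_subset {p : ℝ} (hp : 1 < p) (b : ℂ) :
    numRange p !![1, b; 0, -1] ⊆ nrS p b := by
  rintro z ⟨x, hx, rfl⟩
  have hp0 : 0 < p := lt_trans one_pos hp
  have h0 : (0:ℝ) ≤ ‖x 0‖ := norm_nonneg _
  have h1 : (0:ℝ) ≤ ‖x 1‖ := norm_nonneg _
  set t : ℝ := ‖x 0‖ ^ p with htdef
  have ht0 : 0 ≤ t := Real.rpow_nonneg h0 _
  have h1t0 : 0 ≤ ‖x 1‖ ^ p := Real.rpow_nonneg h1 _
  have hsum : t + ‖x 1‖ ^ p = 1 := by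
    unfold lpNorm at hx
    rw [Fin.sum_univ_two] at hx
    have hnn : 0 ≤ ‖x 0‖ ^ p + ‖x 1‖ ^ p := add_nonneg ht0 h1t0
    have := congrArg (fun y : ℝ => y ^ p) hx
    simpa [← Real.rpow_natCast, ← Real.rpow_mul hnn, one_div,
      inv_mul_cancel₀ hp0.ne'] using this
  have ht1 : t ≤ 1 := by linarith
  have habs1 : ‖x 1‖ = (1 - t) ^ (1/p) := by
    have h' : ‖x 1‖ ^ p = 1 - t := by linarith
    rw [← h', ← Real.rpow_mul h1, mul_one_div_cancel hp0.ne', Real.rpow_one]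
  have habs0p : ‖x 0‖ ^ (p - 1) = t ^ (1 - 1/p) := by
    rw [htdef, ← Real.rpow_mul h0]
    congr 1
    field_simp
  refine ⟨t, ⟨ht0, ht1⟩, ?_⟩
  have hz : (∑ k, (!![1, b; 0, -1]).mulVec x k * (starRingEnd ℂ) (x k) *
        ((‖x k‖ ^ (p - 2) : ℝ) : ℂ))
      = ((2*t - 1 : ℝ) : ℂ) + b * x 1 * (starRingEnd ℂ) (x 0) *
        ((‖x 0‖ ^ (p - 2) : ℝ) : ℂ) := by
    rw [Fin.sum_univ_two]
    have m00 : (!![1, b; 0, -1]) 0 0 = 1 := rfl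
    have m01 : (!![1, b; 0, -1]) 0 1 = b := rfl
    have m10 : (!![1, b; 0, -1]) 1 0 = 0 := rfl
    have m11 : (!![1, b; 0, -1]) 1 1 = -1 := rfl
    simp only [Matrix.mulVec, dotProduct, Fin.sum_univ_two, m00, m01, m10, m11]
    have e0 : x 0 * (starRingEnd ℂ) (x 0) * ((‖x 0‖ ^ (p - 2) : ℝ) : ℂ)
        = ((t : ℝ) : ℂ) := by
      rw [Complex.mul_conj, Complex.normSq_eq_norm_sq, htdef]
      rw [← sq_mul_rpow h0 hp0.ne']
      push_cast
      ring
    have e1 : x 1 * (starRingEnd ℂ) (x 1) * ((‖x 1‖ ^ (p - 2) : ℝ) : ℂ)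
        = (((1 - t : ℝ)) : ℂ) := by
      have h' : ‖x 1‖ ^ p = 1 - t := by linarith
      rw [Complex.mul_conj, Complex.normSq_eq_norm_sq, ← h', ← sq_mul_rpow h1 hp0.ne']
      push_cast
      ring
    have : (1 * x 0 + b * x 1) * (starRingEnd ℂ) (x 0) * ((‖x 0‖ ^ (p - 2) : ℝ) : ℂ)
        = x 0 * (starRingEnd ℂ) (x 0) * ((‖x 0‖ ^ (p - 2) : ℝ) : ℂ)
          + b * x 1 * (starRingEnd ℂ) (x 0) * ((‖x 0‖ ^ (p - 2) : ℝ) : ℂ) := by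
      ring
    rw [this, e0]
    have : (0 * x 0 + -1 * x 1) * (starRingEnd ℂ) (x 1) * ((‖x 1‖ ^ (p - 2) : ℝ) : ℂ)
        = -(x 1 * (starRingEnd ℂ) (x 1) * ((‖x 1‖ ^ (p - 2) : ℝ) : ℂ)) := by
      ring
    rw [this, e1]
    push_cast
    ring
  rw [hz]
  have : ((2*t - 1 : ℝ) : ℂ) + b * x 1 * (starRingEnd ℂ) (x 0) *
        ((‖x 0‖ ^ (p - 2) : ℝ) : ℂ) - ((2*t - 1 : ℝ) : ℂ)
      = b * x 1 * (starRingEnd ℂ) (x 0) * ((‖x 0‖ ^ (p - 2) : ℝ) : ℂ) := by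
    ring
  rw [this]
  have habs : ‖b * x 1 * (starRingEnd ℂ) (x 0) *
        ((‖x 0‖ ^ (p - 2) : ℝ) : ℂ)‖
      = ‖b‖ * nrF p t := by
    rw [norm_mul, norm_mul, norm_mul, Complex.norm_conj, Complex.norm_real, Real.norm_eq_abs,
      _root_.abs_of_nonneg (Real.rpow_nonneg h0 _)]
    have key : ‖x 0‖ * ‖x 0‖ ^ (p - 2) = t ^ (1 - 1/p) := by
      rw [mul_rpow_sub h0 hp, habs0p]
    unfold nrF
    calc ‖b‖ * ‖x 1‖ * ‖x 0‖ * ‖x 0‖ ^ (p - 2)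
        = ‖b‖ * ((‖x 0‖ * ‖x 0‖ ^ (p - 2)) *
            ‖x 1‖) := by ring
      _ = ‖b‖ * (t ^ (1 - 1/p) * (1 - t) ^ (1/p)) := by rw [key, habs1]
  rw [habs]

/-- Construction helper: given a point at prescribed distance, build a witness vector. -/
lemma helper_mem {p : ℝ} (hp : 1 < p) (b z : ℂ) {t : ℝ} (ht : t ∈ Set.Icc (0:ℝ) 1)
    (x1 : ℂ) (habs : ‖x1‖ = (1 - t) ^ (1/p))
    (hcross : b * x1 * ((((t ^ (1/p) : ℝ)) ^ (p - 1) : ℝ) : ℂ) = z - ((2*t - 1 : ℝ) : ℂ)) :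
    z ∈ numRange p !![1, b; 0, -1] := by
  have hp0 : 0 < p := lt_trans one_pos hp
  set r : ℝ := t ^ (1/p) with hrdef
  have hr0 : 0 ≤ r := Real.rpow_nonneg ht.1 _
  have hs0 : (0:ℝ) ≤ (1 - t) ^ (1/p) := Real.rpow_nonneg (by linarith [ht.2]) _
  have hrp : r ^ p = t := by
    rw [hrdef, ← Real.rpow_mul ht.1, one_div_mul_cancel hp0.ne', Real.rpow_one]
  have hsp : ((1 - t) ^ (1/p) : ℝ) ^ p = 1 - t := by
    rw [← Real.rpow_mul (by linarith [ht.2] : (0:ℝ) ≤ 1 - t), one_div_mul_cancel hp0.ne',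
      Real.rpow_one]
  refine ⟨![(r : ℂ), x1], ?_, ?_⟩
  · unfold lpNorm
    rw [Fin.sum_univ_two]
    simp only [Matrix.cons_val_zero, Matrix.cons_val_one, Matrix.head_cons]
    rw [Complex.norm_real, Real.norm_eq_abs, _root_.abs_of_nonneg hr0, habs, hrp, hsp]
    norm_num
  · rw [Fin.sum_univ_two]
    have m00 : (!![1, b; 0, -1]) 0 0 = 1 := rfl
    have m01 : (!![1, b; 0, -1]) 0 1 = b := rfl
    have m10 : (!![1, b; 0, -1]) 1 0 = 0 := rfl
    have m11 : (!![1, b; 0, -1]) 1 1 = -1 := rfl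
    simp only [Matrix.mulVec, dotProduct, Fin.sum_univ_two, m00, m01, m10, m11,
      Matrix.cons_val_zero, Matrix.cons_val_one, Matrix.head_cons]
    rw [Complex.norm_real, Real.norm_eq_abs, _root_.abs_of_nonneg hr0, habs]
    have hconj : (starRingEnd ℂ) ((r : ℝ) : ℂ) = ((r : ℝ) : ℂ) := Complex.conj_ofReal r
    rw [hconj]
    have e0 : ((r : ℝ) : ℂ) * ((r : ℝ) : ℂ) * (((r ^ (p - 2) : ℝ)) : ℂ) = ((t : ℝ) : ℂ) := by
      rw [← hrp, ← sq_mul_rpow hr0 hp0.ne']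
      push_cast
      ring
    have e1 : x1 * (starRingEnd ℂ) x1 * ((((1 - t) ^ (1/p) : ℝ) ^ (p - 2) : ℝ) : ℂ)
        = (((1 - t : ℝ)) : ℂ) := by
      have hreal : (((1 - t) ^ (1/p) : ℝ)) ^ 2 * (((1 - t) ^ (1/p) : ℝ)) ^ (p - 2) = 1 - t := by
        rw [sq_mul_rpow hs0 hp0.ne', hsp]
      rw [Complex.mul_conj, Complex.normSq_eq_norm_sq, habs]
      exact_mod_cast congrArg (Complex.ofReal) hreal
    have e2 : b * x1 * ((r : ℝ) : ℂ) * (((r ^ (p - 2) : ℝ)) : ℂ)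
        = z - ((2*t - 1 : ℝ) : ℂ) := by
      rw [← hcross]
      rw [← mul_rpow_sub hr0 hp]
      push_cast
      ring
    calc z = ((t : ℝ) : ℂ) + (z - ((2*t - 1 : ℝ) : ℂ)) + -(((1 - t : ℝ)) : ℂ) := by
          push_cast
          ring
      _ = (1 * ((r : ℝ) : ℂ) + b * x1) * ((r : ℝ) : ℂ) * (((r ^ (p - 2) : ℝ)) : ℂ)
          + (0 * ((r : ℝ) : ℂ) + -1 * x1) * (starRingEnd ℂ) x1 *
            ((((1 - t) ^ (1/p) : ℝ) ^ (p - 2) : ℝ) : ℂ) := by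
          rw [show (1 * ((r : ℝ) : ℂ) + b * x1) * ((r : ℝ) : ℂ) * (((r ^ (p - 2) : ℝ)) : ℂ)
              = ((r : ℝ) : ℂ) * ((r : ℝ) : ℂ) * (((r ^ (p - 2) : ℝ)) : ℂ)
                + b * x1 * ((r : ℝ) : ℂ) * (((r ^ (p - 2) : ℝ)) : ℂ) from by ring,
            e0, e2,
            show (0 * ((r : ℝ) : ℂ) + -1 * x1) * (starRingEnd ℂ) x1 *
                ((((1 - t) ^ (1/p) : ℝ) ^ (p - 2) : ℝ) : ℂ)
              = -(x1 * (starRingEnd ℂ) x1 * ((((1 - t) ^ (1/p) : ℝ) ^ (p - 2) : ℝ) : ℂ))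
              from by ring, e1]

lemma backward_mem {p : ℝ} (hp : 1 < p) (b z : ℂ) {t : ℝ} (ht : t ∈ Set.Icc (0:ℝ) 1)
    (h : ‖z - ((2*t - 1 : ℝ) : ℂ)‖ = ‖b‖ * nrF p t) :
    z ∈ numRange p !![1, b; 0, -1] := by
  have hp0 : 0 < p := lt_trans one_pos hp
  have ht1 : (0:ℝ) ≤ 1 - t := by linarith [ht.2]
  have hrp1 : ((t ^ (1/p) : ℝ)) ^ (p - 1) = t ^ (1 - 1/p) := by
    rw [← Real.rpow_mul ht.1]
    congr 1
    field_simp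
  by_cases hbr : b * ((((t ^ (1/p) : ℝ)) ^ (p - 1) : ℝ) : ℂ) = 0
  · -- degenerate case: the cross coefficient vanishes, so `z` is on the segment
    have hz0 : ‖b‖ * nrF p t = 0 := by
      rcases mul_eq_zero.1 hbr with hb | hr
      · rw [hb]
        simp
      · have : ((t ^ (1/p) : ℝ)) ^ (p - 1) = 0 := by exact_mod_cast hr
        rw [hrp1] at this
        unfold nrF
        rw [this]
        ring
    refine helper_mem hp b z ht (((1 - t) ^ (1/p) : ℝ) : ℂ) ?_ ?_
    · rw [Complex.norm_real, Real.norm_eq_abs, _root_.abs_of_nonneg (Real.rpow_nonneg ht1 _)]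
    · rw [show b * (((1 - t) ^ (1/p) : ℝ) : ℂ) * ((((t ^ (1/p) : ℝ)) ^ (p - 1) : ℝ) : ℂ)
          = b * ((((t ^ (1/p) : ℝ)) ^ (p - 1) : ℝ) : ℂ) * (((1 - t) ^ (1/p) : ℝ) : ℂ)
          from by ring, hbr]
      have hzz : z - ((2*t - 1 : ℝ) : ℂ) = 0 := norm_eq_zero.1 (h.trans hz0)
      rw [hzz, zero_mul]
  · -- nondegenerate case
    set c : ℂ := b * ((((t ^ (1/p) : ℝ)) ^ (p - 1) : ℝ) : ℂ) with hcdef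
    refine helper_mem hp b z ht ((z - ((2*t - 1 : ℝ) : ℂ)) / c) ?_ ?_
    · rw [norm_div, h, hcdef, norm_mul, Complex.norm_real, Real.norm_eq_abs,
        _root_.abs_of_nonneg (Real.rpow_nonneg (Real.rpow_nonneg ht.1 _) _), hrp1]
      unfold nrF
      have hcpos : 0 < ‖b‖ * t ^ (1 - 1/p) := by
        rcases (mul_ne_zero_iff.1 hbr) with ⟨hb, hr⟩
        have h1 : 0 < ‖b‖ := norm_pos_iff.2 hb
        have h2 : ((t ^ (1/p) : ℝ)) ^ (p - 1) ≠ 0 := by exact_mod_cast hr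
        rw [hrp1] at h2
        have h3 : 0 < t ^ (1 - 1/p) :=
          lt_of_le_of_ne (Real.rpow_nonneg ht.1 _) (Ne.symm h2)
        positivity
      rw [show ‖b‖ * (t ^ (1 - 1/p) * (1 - t) ^ (1/p))
          = (‖b‖ * t ^ (1 - 1/p)) * (1 - t) ^ (1/p) from by ring,
        mul_comm (‖b‖ * t ^ (1 - 1/p)) ((1 - t) ^ (1/p)), mul_div_assoc,
        div_self hcpos.ne', mul_one]
    · rw [show b * ((z - ((2*t - 1 : ℝ) : ℂ)) / c) * ((((t ^ (1/p) : ℝ)) ^ (p - 1) : ℝ) : ℂ)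
          = (z - ((2*t - 1 : ℝ) : ℂ)) * (c / c) from by rw [hcdef]; ring,
        div_self hbr, mul_one]

lemma nrS_subset {p : ℝ} (hp : 1 < p) (b : ℂ) :
    nrS p b ⊆ numRange p !![1, b; 0, -1] := by
  rintro z ⟨t, ht, hle⟩
  have hp0 : 0 < p := lt_trans one_pos hp
  have ha : (0:ℝ) < 1 - 1/p := by
    have : 1/p < 1 := by rw [div_lt_one hp0]; linarith
    linarith
  -- intermediate value theorem to upgrade `≤` to `=`
  set g : ℝ → ℝ := fun s => ‖b‖ * nrF p s - ‖z - ((2*s - 1 : ℝ) : ℂ)‖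
    with hgdef
  have hcont : Continuous g := by
    apply Continuous.sub
    · apply Continuous.mul continuous_const
      unfold nrF
      apply Continuous.mul
      · exact continuous_iff_continuousAt.2 fun x =>
          Real.continuousAt_rpow_const x _ (Or.inr ha.le)
      · exact (continuous_iff_continuousAt.2 fun x =>
          Real.continuousAt_rpow_const x _ (Or.inr (by positivity))).comp
          (continuous_const.sub continuous_id)
    · exact continuous_norm.comp
        (continuous_const.sub (Complex.continuous_ofReal.comp
          ((continuous_const.mul continuous_id).sub continuous_const)))
  have hg0 : g 0 ≤ 0 := by
    have : nrF p 0 = 0 := by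
      unfold nrF
      rw [Real.zero_rpow ha.ne']
      ring
    simp only [hgdef, this]
    simp [norm_nonneg]
  have hgt : 0 ≤ g t := by
    simp only [hgdef]
    linarith [hle]
  have : (0:ℝ) ∈ Set.Icc (g 0) (g t) := ⟨hg0, hgt⟩
  obtain ⟨t', ht', hgt'⟩ := intermediate_value_Icc ht.1 hcont.continuousOn this
  have ht'' : t' ∈ Set.Icc (0:ℝ) 1 := ⟨ht'.1, le_trans ht'.2 ht.2⟩
  refine backward_mem hp b z ht'' ?_
  have := hgt'
  simp only [hgdef] at this
  linarith

theorem numRange_convex (p : ℝ) (hp : 1 < p) (b : ℂ) :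
    Convex ℝ (numRange p !![1, b; 0, -1]) := by
  have heq : numRange p !![1, b; 0, -1] = nrS p b :=
    Set.Subset.antisymm (numRange_subset hp b) (nrS_subset hp b)
  rw [heq]
  rintro z₁ ⟨t₁, ht₁, h₁⟩ z₂ ⟨t₂, ht₂, h₂⟩ lam mu hlam hmu hsum
  refine ⟨lam * t₁ + mu * t₂,
    ⟨add_nonneg (mul_nonneg hlam ht₁.1) (mul_nonneg hmu ht₂.1), by nlinarith [ht₁.1, ht₁.2, ht₂.1, ht₂.2]⟩, ?_⟩
  have hc : (lam : ℂ) + (mu : ℂ) = 1 := by exact_mod_cast hsum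
  have hdecomp : lam • z₁ + mu • z₂ - ((2*(lam * t₁ + mu * t₂) - 1 : ℝ) : ℂ)
      = (lam : ℂ) * (z₁ - ((2*t₁ - 1 : ℝ) : ℂ)) + (mu : ℂ) * (z₂ - ((2*t₂ - 1 : ℝ) : ℂ)) := by
    simp only [Complex.real_smul]
    push_cast
    linear_combination (-1 : ℂ) * hc
  rw [hdecomp]
  calc ‖(lam : ℂ) * (z₁ - ((2*t₁ - 1 : ℝ) : ℂ))
        + (mu : ℂ) * (z₂ - ((2*t₂ - 1 : ℝ) : ℂ))‖
      ≤ ‖(lam : ℂ) * (z₁ - ((2*t₁ - 1 : ℝ) : ℂ))‖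
        + ‖(mu : ℂ) * (z₂ - ((2*t₂ - 1 : ℝ) : ℂ))‖ := norm_add_le _ _
    _ = lam * ‖z₁ - ((2*t₁ - 1 : ℝ) : ℂ)‖
        + mu * ‖z₂ - ((2*t₂ - 1 : ℝ) : ℂ)‖ := by
        rw [norm_mul, norm_mul, Complex.norm_real, Real.norm_eq_abs, Complex.norm_real, Real.norm_eq_abs,
          _root_.abs_of_nonneg hlam, _root_.abs_of_nonneg hmu]
    _ ≤ lam * (‖b‖ * nrF p t₁) + mu * (‖b‖ * nrF p t₂) :=
        add_le_add (mul_le_mul_of_nonneg_left h₁ hlam) (mul_le_mul_of_nonneg_left h₂ hmu)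
    _ = ‖b‖ * (lam * nrF p t₁ + mu * nrF p t₂) := by ring
    _ ≤ ‖b‖ * nrF p (lam * t₁ + mu * t₂) :=
        mul_le_mul_of_nonneg_left (nrF_concave hp ht₁ ht₂ hlam hmu hsum)
          (norm_nonneg b)
end

section
/- Let b ∈ ℂ and let T be the 2×2 complex matrix with rows (1, b) and (0, −1), acting on ℓ_p². Then the numerical radius satisfies v_p(T) ≤ 1 + |b|·(1/p)^{1/p}·(1/q)^{1/q}; equivalently, every λ ∈ V_p(T) satisfies |λ| ≤ 1 + |b|·(1/p)^{1/p}·(1/q)^{1/q}. -/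
open Complex Real

lemma aux_pow1 (p a : ℝ) (ha : 0 ≤ a) (hp : 1 < p) : a * a * a ^ (p - 2) ≤ a ^ p := by
  rcases eq_or_lt_of_le ha with h | h
  · rw [← h, Real.zero_rpow (by linarith : p ≠ 0)]; norm_num
  · apply le_of_eq
    have : a * a * a ^ (p - 2) = a ^ (1:ℝ) * a ^ (1:ℝ) * a ^ (p - 2) := by
      rw [Real.rpow_one]
    rw [this, ← Real.rpow_add h, ← Real.rpow_add h]
    norm_num

lemma aux_pow2 (p a : ℝ) (ha : 0 ≤ a) (hp : 1 < p) : a * a ^ (p - 2) ≤ a ^ (p - 1) := by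
  rcases eq_or_lt_of_le ha with h | h
  · rw [← h, Real.zero_rpow (by intro h'; linarith [h'] : p - 1 ≠ 0)]
    rcases eq_or_ne (p - 2) 0 with h2 | h2
    · rw [h2]; norm_num
    · rw [Real.zero_rpow h2]; norm_num
  · apply le_of_eq
    have : a * a ^ (p - 2) = a ^ (1:ℝ) * a ^ (p - 2) := by rw [Real.rpow_one]
    rw [this, ← Real.rpow_add h]
    congr 1
    ring

lemma young_key (p q : ℝ) (hp : 1 < p) (hq : q = p / (p - 1)) (u v : ℝ)
    (hu : 0 ≤ u) (hv : 0 ≤ v) (huv : u + v = 1) :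
    v ^ (1 / p) * u ^ (1 / q) ≤ (1 / p) ^ (1 / p) * (1 / q) ^ (1 / q) := by
  have hp0 : 0 < p := by linarith
  have hp1 : 0 < p - 1 := by linarith
  have hq0 : 0 < q := by rw [hq]; exact div_pos (by linarith) (by linarith)
  have h := Real.geom_mean_le_arith_mean2_weighted
    (by positivity : (0:ℝ) ≤ 1 / p) (by positivity : (0:ℝ) ≤ 1 / q)
    (by positivity : (0:ℝ) ≤ p * v) (by positivity : (0:ℝ) ≤ q * u)
    (by rw [hq]; field_simp; ring)
  rw [Real.mul_rpow hp0.le hv, Real.mul_rpow hq0.le hu] at h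
  have hrhs : 1 / p * (p * v) + 1 / q * (q * u) = 1 := by
    field_simp; linarith
  rw [hrhs] at h
  have hP : 0 < p ^ (1 / p) := Real.rpow_pos_of_pos hp0 _
  have hQ : 0 < q ^ (1 / q) := Real.rpow_pos_of_pos hq0 _
  have e1 : (1 / p) ^ (1 / p) = (p ^ (1/p : ℝ))⁻¹ := by
    rw [one_div, Real.inv_rpow hp0.le]
  have e2 : (1 / q) ^ (1 / q) = (q ^ (1/q : ℝ))⁻¹ := by
    rw [one_div, Real.inv_rpow hq0.le]
  rw [e1, e2]
  calc v ^ (1/p) * u ^ (1/q)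
      = (p ^ (1/p) * v ^ (1/p) * (q ^ (1/q) * u ^ (1/q))) / (p ^ (1/p) * q ^ (1/q)) := by
        field_simp
    _ ≤ 1 / (p ^ (1/p) * q ^ (1/q)) := by gcongr
    _ = (p ^ (1/p : ℝ))⁻¹ * (q ^ (1/q : ℝ))⁻¹ := by rw [one_div, mul_inv]


theorem numRadius_upper_bound (p q : ℝ) (hp : 1 < p) (hq : q = p / (p - 1)) (b : ℂ) :
    numRadius p !![1, b; 0, -1] ≤ 1 + ‖b‖ * ((1 / p) ^ (1 / p) * (1 / q) ^ (1 / q)) ∧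
    ∀ lam ∈ numRange p !![1, b; 0, -1],
      ‖lam‖ ≤ 1 + ‖b‖ * ((1 / p) ^ (1 / p) * (1 / q) ^ (1 / q)) := by
  have hp0 : 0 < p := by linarith
  have hq0 : 0 < q := by rw [hq]; exact div_pos (by linarith) (by linarith)
  have hB : (0:ℝ) ≤ 1 + ‖b‖ * ((1 / p) ^ (1 / p) * (1 / q) ^ (1 / q)) :=
    add_nonneg zero_le_one (mul_nonneg (norm_nonneg b)
      (mul_nonneg (Real.rpow_nonneg (div_nonneg zero_le_one hp0.le) _) (Real.rpow_nonneg (div_nonneg zero_le_one hq0.le) _)))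
  have key : ∀ lam ∈ numRange p !![1, b; 0, -1],
      ‖lam‖ ≤ 1 + ‖b‖ * ((1 / p) ^ (1 / p) * (1 / q) ^ (1 / q)) := by
    rintro lam ⟨x, hx, rfl⟩
    set a := ‖x 0‖ with ha_def
    set c := ‖x 1‖ with hc_def
    have ha : 0 ≤ a := norm_nonneg _
    have hc : 0 ≤ c := norm_nonneg _
    have hsum : a ^ p + c ^ p = 1 := by
      have hx' : (a ^ p + c ^ p) ^ (1 / p) = 1 := by
        simpa [lpNorm, Fin.sum_univ_two] using hx
      have h0 : (0:ℝ) ≤ a ^ p + c ^ p := by positivity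
      have := congrArg (· ^ p) hx'
      simp only [Real.one_rpow] at this
      rwa [← Real.rpow_mul h0, one_div, inv_mul_cancel₀ (ne_of_gt hp0),
        Real.rpow_one] at this
    have hz : (∑ k, (!![1, b; 0, -1]).mulVec x k * (starRingEnd ℂ) (x k) *
          ((‖x k‖ ^ (p - 2) : ℝ) : ℂ)) =
        x 0 * (starRingEnd ℂ) (x 0) * ((a ^ (p - 2) : ℝ) : ℂ)
          + b * x 1 * (starRingEnd ℂ) (x 0) * ((a ^ (p - 2) : ℝ) : ℂ)
          + (-(x 1 * (starRingEnd ℂ) (x 1) * ((c ^ (p - 2) : ℝ) : ℂ))) := by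
      simp [Matrix.mulVec, dotProduct, Fin.sum_univ_two]
      ring
    rw [hz]
    have t1 : ‖x 0 * (starRingEnd ℂ) (x 0) * ((a ^ (p - 2) : ℝ) : ℂ)‖
        ≤ a ^ p := by
      rw [norm_mul, norm_mul, Complex.norm_conj, Complex.norm_real,
        Real.norm_of_nonneg (Real.rpow_nonneg ha _)]
      exact aux_pow1 p a ha hp
    have t3 : ‖-(x 1 * (starRingEnd ℂ) (x 1) * ((c ^ (p - 2) : ℝ) : ℂ))‖
        ≤ c ^ p := by
      rw [norm_neg, norm_mul, norm_mul, Complex.norm_conj, Complex.norm_real,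
        Real.norm_of_nonneg (Real.rpow_nonneg hc _)]
      exact aux_pow1 p c hc hp
    have t2 : ‖b * x 1 * (starRingEnd ℂ) (x 0) * ((a ^ (p - 2) : ℝ) : ℂ)‖
        ≤ ‖b‖ * ((1 / p) ^ (1 / p) * (1 / q) ^ (1 / q)) := by
      rw [norm_mul, norm_mul, norm_mul, Complex.norm_conj, Complex.norm_real,
        Real.norm_of_nonneg (Real.rpow_nonneg ha _)]
      have step1 : ‖b‖ * c * a * a ^ (p - 2)
          ≤ ‖b‖ * (c * a ^ (p - 1)) := by
        have := aux_pow2 p a ha hp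
        calc ‖b‖ * c * a * a ^ (p - 2)
            = ‖b‖ * (c * (a * a ^ (p - 2))) := by ring
          _ ≤ ‖b‖ * (c * a ^ (p - 1)) := by gcongr
      refine step1.trans ?_
      gcongr ‖b‖ * ?_
      have hc_eq : c = (c ^ p) ^ (1 / p : ℝ) := by
        rw [← Real.rpow_mul hc, mul_one_div, div_self (ne_of_gt hp0), Real.rpow_one]
      have ha_eq : a ^ (p - 1) = (a ^ p) ^ (1 / q : ℝ) := by
        rw [← Real.rpow_mul ha]
        congr 1
        rw [hq]
        field_simp
      rw [hc_eq, ha_eq]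
      exact young_key p q hp hq (a ^ p) (c ^ p)
        (Real.rpow_nonneg ha _) (Real.rpow_nonneg hc _) hsum
    calc ‖_‖ ≤ ‖x 0 * (starRingEnd ℂ) (x 0) * ((a ^ (p - 2) : ℝ) : ℂ)
            + b * x 1 * (starRingEnd ℂ) (x 0) * ((a ^ (p - 2) : ℝ) : ℂ)‖
          + ‖-(x 1 * (starRingEnd ℂ) (x 1) * ((c ^ (p - 2) : ℝ) : ℂ))‖ :=
        norm_add_le _ _
      _ ≤ (‖x 0 * (starRingEnd ℂ) (x 0) * ((a ^ (p - 2) : ℝ) : ℂ)‖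
            + ‖b * x 1 * (starRingEnd ℂ) (x 0) * ((a ^ (p - 2) : ℝ) : ℂ)‖)
          + ‖-(x 1 * (starRingEnd ℂ) (x 1) * ((c ^ (p - 2) : ℝ) : ℂ))‖ := by
        gcongr
        exact norm_add_le _ _
      _ ≤ (a ^ p + ‖b‖ * ((1 / p) ^ (1 / p) * (1 / q) ^ (1 / q))) + c ^ p := by
        gcongr
      _ = 1 + ‖b‖ * ((1 / p) ^ (1 / p) * (1 / q) ^ (1 / q)) := by
        rw [add_comm (a ^ p) _, add_assoc, hsum, add_comm]
  refine ⟨?_, key⟩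
  apply Real.sSup_le _ hB
  rintro y ⟨lam, hlam, rfl⟩
  exact key lam hlam
end
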